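/- Let x, s, u ∈ ℂ be nonzero and λ, ε ∈ ℝ. Then for every z ∈ ℂ∖{0} such that the denominators of f_{x,s,u,λ,ε} are nonzero at z and at q²z, one has (π_{λ,ε}(Y_{s,u}) f_{x,s,u,λ,ε})(z) = (μ_x − μ_s)·f_{x,s,u,λ,ε}(z); that is, f_{x,s,u,λ,ε} is an eigenfunction of π_{λ,ε}(Y_{s,u}) with eigenvalue μ_x − μ_s. -/

import Mathlib

noncomputable section

open Complex

/-- `q^{iλ} := exp(iλ · log q)`. -/
def qil (q lam : ℝ) : ℂ := Complex.exp (Complex.I * lam * Real.log q)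

/-- the real power `q^a` viewed as a complex number. -/
def qr (q a : ℝ) : ℂ := ((q ^ a : ℝ) : ℂ)

/-- the infinite `q`-shifted factorial `(w;p)_∞ = ∏_{j≥0} (1 - w p^j)`. -/
def qPoch (w p : ℂ) : ℂ := ∏' j : ℕ, (1 - w * p ^ j)

/-- the theta function `θ(w;p) = (w;p)_∞ (p/w;p)_∞`. -/
def qTheta (w p : ℂ) : ℂ := qPoch w p * qPoch (p / w) p

/-- `μ_s = (s + s⁻¹)/(q⁻¹ - q)`. -/
def mu (q : ℝ) (s : ℂ) : ℂ := (s + s⁻¹) / ((q : ℂ)⁻¹ - (q : ℂ))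

/-- The eigenfunction
`f_{x,s,u,λ,ε}(z) = (sq^{1−2iλ}x^{±1}, uszq^{1+iλ};q²)_∞ θ(q^{2ε−iλ}uz/s;q²) /
(uzq^{−iλ}x^{±1}, sq^{1−iλ}/(uz);q²)_∞`. -/
def fAW (q lam eps : ℝ) (x s u : ℂ) (z : ℂ) : ℂ :=
  (qPoch (s * (q : ℂ) * ((qil q lam)⁻¹) ^ 2 * x) ((q : ℂ) ^ 2) *
    qPoch (s * (q : ℂ) * ((qil q lam)⁻¹) ^ 2 / x) ((q : ℂ) ^ 2) *
    qPoch (u * s * z * (q : ℂ) * qil q lam) ((q : ℂ) ^ 2) *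
    qTheta (qr q (2 * eps) * (qil q lam)⁻¹ * u * z / s) ((q : ℂ) ^ 2)) /
  (qPoch (u * z * (qil q lam)⁻¹ * x) ((q : ℂ) ^ 2) *
    qPoch (u * z * (qil q lam)⁻¹ / x) ((q : ℂ) ^ 2) *
    qPoch (s * (q : ℂ) * (qil q lam)⁻¹ / (u * z)) ((q : ℂ) ^ 2))

/-- the denominator of `f_{x,s,u,λ,ε}` at the point `z`. -/
def fDen (q lam : ℝ) (x s u : ℂ) (z : ℂ) : ℂ :=
  qPoch (u * z * (qil q lam)⁻¹ * x) ((q : ℂ) ^ 2) *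
    qPoch (u * z * (qil q lam)⁻¹ / x) ((q : ℂ) ^ 2) *
    qPoch (s * (q : ℂ) * (qil q lam)⁻¹ / (u * z)) ((q : ℂ) ^ 2)
/-- action of the twisted primitive element `Y_{s,u}` in the representation `π_{λ,ε}`. -/
def piY (q lam eps : ℝ) (s u : ℂ) (f : ℂ → ℂ) (z : ℂ) : ℂ :=
  qr q (2 * eps) *
      ((s + s⁻¹ - u * z * (q : ℂ) * qil q lam - u⁻¹ * z⁻¹ * (q : ℂ)⁻¹ * (qil q lam)⁻¹) /
        ((q : ℂ)⁻¹ - (q : ℂ))) * f ((q : ℂ) ^ 2 * z)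
    + ((u * z * (qil q lam)⁻¹ + u⁻¹ * z⁻¹ * qil q lam - s - s⁻¹) / ((q : ℂ)⁻¹ - (q : ℂ))) * f z

lemma multipliable_qPoch (w p : ℂ) (hp : ‖p‖ < 1) :
    Multipliable (fun j : ℕ => 1 - w * p ^ j) := by
  by_cases h : ∀ j : ℕ, 1 - w * p ^ j ≠ 0
  · have hgeo : Summable (fun j : ℕ => (3/2 : ℝ) * (‖w‖ * ‖p‖ ^ j)) :=
      ((summable_geometric_of_lt_one (norm_nonneg p) hp).mul_left ‖w‖).mul_left _
    have h0 : Filter.Tendsto (fun j : ℕ => ‖w‖ * ‖p‖ ^ j) Filter.atTop (nhds 0) := by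
      have := (tendsto_pow_atTop_nhds_zero_of_lt_one (norm_nonneg p) hp).const_mul ‖w‖
      simpa using this
    have hev : ∀ᶠ j : ℕ in Filter.atTop, ‖w‖ * ‖p‖ ^ j ≤ 1/2 :=
      h0.eventually_le_const (by norm_num)
    have hs : Summable (fun j : ℕ => Complex.log (1 - w * p ^ j)) := by
      apply Summable.of_norm_bounded_eventually_nat hgeo
      filter_upwards [hev] with j hj
      have hnorm : ‖-(w * p ^ j)‖ ≤ 1/2 := by
        rw [norm_neg, norm_mul, norm_pow]; exact hj
      have := Complex.norm_log_one_add_half_le_self hnorm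
      rw [show (1 : ℂ) + -(w * p ^ j) = 1 - w * p ^ j by ring] at this
      calc ‖Complex.log (1 - w * p ^ j)‖ ≤ 3/2 * ‖-(w * p ^ j)‖ := this
        _ = 3/2 * (‖w‖ * ‖p‖ ^ j) := by rw [norm_neg, norm_mul, norm_pow]
    exact Complex.multipliable_of_summable_log hs
  · push_neg at h
    obtain ⟨j0, hj0⟩ := h
    refine ⟨0, ?_⟩
    rw [HasProd]
    apply Filter.Tendsto.congr' _ tendsto_const_nhds
    filter_upwards [Filter.eventually_ge_atTop ({j0} : Finset ℕ)] with s hs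
    exact (Finset.prod_eq_zero (hs (Finset.mem_singleton_self j0)) hj0).symm

set_option maxHeartbeats 1000000 in
lemma qPoch_rec (w p : ℂ) (hp : ‖p‖ < 1) :
    qPoch w p = (1 - w) * qPoch (w * p) p := by
  have hm : Multipliable (fun n : ℕ => 1 - w * p ^ (n + 1)) := by
    have := multipliable_qPoch (w * p) p hp
    apply this.congr
    intro j; ring
  have h := tprod_eq_zero_mul' (f := fun n : ℕ => 1 - w * p ^ n) hm
  rw [qPoch, h]
  simp only [pow_zero, mul_one]
  rw [qPoch]
  congr 1
  exact tprod_congr fun j => by ring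

lemma qTheta_rec (w p : ℂ) (hw : w ≠ 0) (hp0 : p ≠ 0) (hp : ‖p‖ < 1) :
    w * qTheta (p * w) p = - qTheta w p := by
  have h1 : qPoch w p = (1 - w) * qPoch (w * p) p := qPoch_rec w p hp
  have h2 : qPoch w⁻¹ p = (1 - w⁻¹) * qPoch (w⁻¹ * p) p := qPoch_rec w⁻¹ p hp
  rw [qTheta, qTheta]
  rw [show p / (p * w) = w⁻¹ by field_simp]
  rw [h1, h2]
  rw [show p / w = w⁻¹ * p by field_simp, show p * w = w * p by ring]
  field_simp
  ring

lemma comb1 (a b c d e : ℂ) : a * (b/c) * (d/e) = a*b*d/(c*e) := by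
  rw [mul_assoc, div_mul_div_comm, mul_div_assoc', ← mul_assoc]

lemma frac_identity (A B C D1 D2 : ℂ) (h1 : D1 ≠ 0) (h2 : D2 ≠ 0)
    (key : A * D2 + B * D1 = C * D1) : A / D1 + B / D2 = C / D2 := by
  rw [div_add_div _ _ h1 h2, show A * D2 + D1 * B = C * D1 by linear_combination key,
    mul_comm D1 D2, mul_div_mul_right _ _ h1]

set_option maxHeartbeats 2000000 in
/-- `f_{x,s,u,λ,ε}` is an eigenfunction of `π_{λ,ε}(Y_{s,u})` with eigenvalue `μ_x − μ_s`. -/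
theorem stmt2 (q : ℝ) (hq0 : 0 < q) (hq1 : q < 1) (lam eps : ℝ) (x s u : ℂ)
    (hx : x ≠ 0) (hs : s ≠ 0) (hu : u ≠ 0) (z : ℂ) (hz : z ≠ 0)
    (hd1 : fDen q lam x s u z ≠ 0) (hd2 : fDen q lam x s u ((q : ℂ) ^ 2 * z) ≠ 0) :
    piY q lam eps s u (fAW q lam eps x s u) z = (mu q x - mu q s) * fAW q lam eps x s u z := by
  have hqc : (q : ℂ) ≠ 0 := by exact_mod_cast hq0.ne'
  have hL0 : qil q lam ≠ 0 := Complex.exp_ne_zero _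
  have hE0 : qr q (2 * eps) ≠ 0 := by
    simp only [qr, ne_eq, Complex.ofReal_eq_zero]
    exact (Real.rpow_pos_of_pos hq0 _).ne'
  have hp0 : ((q : ℂ) ^ 2) ≠ 0 := pow_ne_zero _ hqc
  have hpn : ‖((q : ℂ) ^ 2)‖ < 1 := by
    rw [norm_pow, Complex.norm_real, Real.norm_of_nonneg hq0.le]
    nlinarith
  have hq2 : 1 - (q : ℂ)^2 ≠ 0 := by
    have : ((1 - q^2 : ℝ) : ℂ) ≠ 0 := by
      have : (0:ℝ) < 1 - q^2 := by nlinarith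
      exact_mod_cast this.ne'
    simpa using this
  have hden : (q : ℂ)⁻¹ - (q : ℂ) ≠ 0 := by
    rw [inv_eq_one_div, div_sub' hqc]
    apply div_ne_zero _ hqc
    simpa [sq] using hq2
  simp only [piY, fAW, fDen, mu] at hd1 hd2 ⊢
  set L := qil q lam with hLdef
  set E := qr q (2 * eps) with hEdef
  have hwT : E * L⁻¹ * u * z / s ≠ 0 :=
    div_ne_zero (mul_ne_zero (mul_ne_zero (mul_ne_zero hE0 (inv_ne_zero hL0)) hu) hz) hs
  -- normalize shifted arguments
  rw [show u * s * ((q:ℂ)^2 * z) * (q:ℂ) * L = u*s*z*(q:ℂ)*L * (q:ℂ)^2 by ring,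
      show E * L⁻¹ * u * ((q:ℂ)^2 * z) / s = (q:ℂ)^2 * (E * L⁻¹ * u * z / s) by ring,
      show u * ((q:ℂ)^2 * z) * L⁻¹ * x = u*z*L⁻¹*x * (q:ℂ)^2 by ring,
      show u * ((q:ℂ)^2 * z) * L⁻¹ / x = u*z*L⁻¹/x * (q:ℂ)^2 by ring]
  rw [show u * ((q:ℂ)^2 * z) * L⁻¹ * x = u*z*L⁻¹*x * (q:ℂ)^2 by ring,
      show u * ((q:ℂ)^2 * z) * L⁻¹ / x = u*z*L⁻¹/x * (q:ℂ)^2 by ring] at hd2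
  -- recurrences
  have rD : qPoch (s*(q:ℂ)*L⁻¹/(u*((q:ℂ)^2*z))) ((q:ℂ)^2)
      = (1 - s*(q:ℂ)*L⁻¹/(u*((q:ℂ)^2*z))) * qPoch (s*(q:ℂ)*L⁻¹/(u*z)) ((q:ℂ)^2) := by
    rw [qPoch_rec _ _ hpn]
    congr 2
    field_simp
  have rT : qTheta ((q:ℂ)^2 * (E*L⁻¹*u*z/s)) ((q:ℂ)^2)
      = -(s * L * qTheta (E*L⁻¹*u*z/s) ((q:ℂ)^2)) / (E * u * z) := by
    have h := qTheta_rec (E*L⁻¹*u*z/s) ((q:ℂ)^2) hwT hp0 hpn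
    rw [eq_div_iff (mul_ne_zero (mul_ne_zero hE0 hu) hz)]
    have hLi : L * L⁻¹ = 1 := mul_inv_cancel₀ hL0
    have hsi : s * s⁻¹ = 1 := mul_inv_cancel₀ hs
    linear_combination (s*L) * h
      - (E*u*z* qTheta ((q:ℂ)^2 * (E*L⁻¹*u*z/s)) ((q:ℂ)^2)) * hLi
      - (E*u*z* qTheta ((q:ℂ)^2 * (E*L⁻¹*u*z/s)) ((q:ℂ)^2) * (L*L⁻¹)) * hsi
  rw [qPoch_rec (u*z*L⁻¹*x) _ hpn, qPoch_rec (u*z*L⁻¹/x) _ hpn,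
      qPoch_rec (u*s*z*(q:ℂ)*L) _ hpn, rT, rD]
  rw [qPoch_rec (u*z*L⁻¹*x) _ hpn, qPoch_rec (u*z*L⁻¹/x) _ hpn] at hd1
  rw [rD] at hd2
  -- atoms
  set K1 := qPoch (s*(q:ℂ)*(L⁻¹)^2*x) ((q:ℂ)^2) with hK1
  set K2 := qPoch (s*(q:ℂ)*(L⁻¹)^2/x) ((q:ℂ)^2) with hK2
  set A2 := qPoch (u*s*z*(q:ℂ)*L*(q:ℂ)^2) ((q:ℂ)^2) with hA2
  set T := qTheta (E*L⁻¹*u*z/s) ((q:ℂ)^2) with hT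
  set Pb := qPoch (u*z*L⁻¹*x*(q:ℂ)^2) ((q:ℂ)^2) with hPbd
  set Pc := qPoch (u*z*L⁻¹/x*(q:ℂ)^2) ((q:ℂ)^2) with hPcd
  set Pd := qPoch (s*(q:ℂ)*L⁻¹/(u*z)) ((q:ℂ)^2) with hPdd
  -- nonvanishing
  have h1b : (1 : ℂ) - u*z*L⁻¹*x ≠ 0 := fun h => hd1 (by rw [h]; ring)
  have hPb : Pb ≠ 0 := fun h => hd1 (by rw [h]; ring)
  have h1c : (1 : ℂ) - u*z*L⁻¹/x ≠ 0 := fun h => hd1 (by rw [h]; ring)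
  have hPc : Pc ≠ 0 := fun h => hd1 (by rw [h]; ring)
  have hPd : Pd ≠ 0 := fun h => hd1 (by rw [h]; ring)
  have h1d2 : (1 : ℂ) - s*(q:ℂ)*L⁻¹/(u*((q:ℂ)^2*z)) ≠ 0 := fun h => hd2 (by rw [h]; ring)
  have eb : (1 : ℂ) - u*z*L⁻¹*x = (L - u*z*x) / L := by
    rw [eq_div_iff hL0]; field_simp; try ring
  have ec : (1 : ℂ) - u*z*L⁻¹/x = (L*x - u*z) / (L*x) := by
    rw [eq_div_iff (mul_ne_zero hL0 hx)]; field_simp; try ring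
  have ed : (1 : ℂ) - s*(q:ℂ)*L⁻¹/(u*((q:ℂ)^2*z)) = (u*(q:ℂ)^2*z*L - s*(q:ℂ)) / (u*(q:ℂ)^2*z*L) := by
    rw [eq_div_iff (mul_ne_zero (mul_ne_zero (mul_ne_zero hu hp0) hz) hL0)]
    field_simp
    try ring
  have e0 : (q:ℂ)⁻¹ - (q:ℂ) = (1 - (q:ℂ)^2) / (q:ℂ) := by
    rw [eq_div_iff hqc]; field_simp; try ring
  have h1b' : L - u*z*x ≠ 0 := by
    intro h; apply h1b; rw [eb, h, zero_div]
  have h1c' : L*x - u*z ≠ 0 := by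
    intro h; apply h1c; rw [ec, h, zero_div]
  have h1d2' : u*(q:ℂ)^2*z*L - s*(q:ℂ) ≠ 0 := by
    intro h; apply h1d2; rw [ed, h, zero_div]
  rw [eb, ec, ed, e0]
  have hDz0 : (L - u*z*x)/L*Pb*((L*x - u*z)/(L*x)*Pc)*Pd ≠ 0 :=
    mul_ne_zero (mul_ne_zero (mul_ne_zero (div_ne_zero h1b' hL0) hPb)
      (mul_ne_zero (div_ne_zero h1c' (mul_ne_zero hL0 hx)) hPc)) hPd
  have hDz1 : (L - u*z*x)*((L*x - u*z)*(Pb*Pc*Pd)) ≠ 0 :=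
    mul_ne_zero h1b' (mul_ne_zero h1c' (mul_ne_zero (mul_ne_zero hPb hPc) hPd))
  have hD20 : Pb*Pc*((u*(q:ℂ)^2*z*L - s*(q:ℂ))/(u*(q:ℂ)^2*z*L)*Pd) ≠ 0 :=
    mul_ne_zero (mul_ne_zero hPb hPc)
      (mul_ne_zero (div_ne_zero h1d2' (mul_ne_zero (mul_ne_zero (mul_ne_zero hu hp0) hz) hL0)) hPd)
  have hD21 : (E*u*z)*((u*(q:ℂ)^2*z*L - s*(q:ℂ))*(Pb*Pc*Pd)) ≠ 0 :=
    mul_ne_zero (mul_ne_zero (mul_ne_zero hE0 hu) hz)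
      (mul_ne_zero h1d2' (mul_ne_zero (mul_ne_zero hPb hPc) hPd))
  have Fz : K1*K2*((1 - u*s*z*(q:ℂ)*L)*A2)*T / ((L - u*z*x)/L*Pb*((L*x - u*z)/(L*x)*Pc)*Pd)
      = L^2*x*(1 - u*s*z*(q:ℂ)*L)*(K1*K2*A2*T) / ((L - u*z*x)*((L*x - u*z)*(Pb*Pc*Pd))) := by
    rw [div_eq_div_iff hDz0 hDz1]
    field_simp
  have F2 : K1*K2*A2*(-(s*L*T)/(E*u*z)) / (Pb*Pc*((u*(q:ℂ)^2*z*L - s*(q:ℂ))/(u*(q:ℂ)^2*z*L)*Pd))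
      = -(s*u*z*(q:ℂ)^2*L^2)*(K1*K2*A2*T) / ((E*u*z)*((u*(q:ℂ)^2*z*L - s*(q:ℂ))*(Pb*Pc*Pd))) := by
    rw [div_eq_div_iff hD20 hD21]
    field_simp
  rw [Fz, F2]
  have hM1 : s*u*z*(q:ℂ)*L ≠ 0 :=
    mul_ne_zero (mul_ne_zero (mul_ne_zero (mul_ne_zero hs hu) hz) hqc) hL0
  have hM2 : u*z*L*s ≠ 0 := mul_ne_zero (mul_ne_zero (mul_ne_zero hu hz) hL0) hs
  have hus : u*u⁻¹ = 1 := mul_inv_cancel₀ hu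
  have hzs : z*z⁻¹ = 1 := mul_inv_cancel₀ hz
  have hqs : (q:ℂ)*(q:ℂ)⁻¹ = 1 := mul_inv_cancel₀ hqc
  have hLs : L*L⁻¹ = 1 := mul_inv_cancel₀ hL0
  have hss : s*s⁻¹ = 1 := mul_inv_cancel₀ hs
  have hxs : x*x⁻¹ = 1 := mul_inv_cancel₀ hx
  rw [show s + s⁻¹ - u*z*(q:ℂ)*L - u⁻¹*z⁻¹*(q:ℂ)⁻¹*L⁻¹
        = (s^2*u*z*(q:ℂ)*L + u*z*(q:ℂ)*L - s*u^2*z^2*(q:ℂ)^2*L^2 - s)/(s*u*z*(q:ℂ)*L) by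
      rw [eq_div_iff hM1]
      linear_combination (u*z*(q:ℂ)*L)*hss
        - s*(hus*(z*z⁻¹*(q:ℂ)*(q:ℂ)⁻¹*L*L⁻¹) + hzs*((q:ℂ)*(q:ℂ)⁻¹*L*L⁻¹) + hqs*(L*L⁻¹) + hLs)]
  rw [show u*z*L⁻¹ + u⁻¹*z⁻¹*L - s - s⁻¹
        = (u^2*z^2*s + L^2*s - s^2*u*z*L - u*z*L)/(u*z*L*s) by
      rw [eq_div_iff hM2]
      linear_combination (u^2*z^2*s)*hLs + (L^2*s)*(hus*(z*z⁻¹) + hzs) - (u*z*L)*hss]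
  rw [show x + x⁻¹ = (x^2+1)/x by rw [eq_div_iff hx]; linear_combination hxs]
  rw [show s + s⁻¹ = (s^2+1)/s by rw [eq_div_iff hs]; linear_combination hss]
  have hDq : (1-(q:ℂ)^2)/(q:ℂ) ≠ 0 := div_ne_zero hq2 hqc
  have hPPP : Pb*Pc*Pd ≠ 0 := mul_ne_zero (mul_ne_zero hPb hPc) hPd
  have hDA : (1-(q:ℂ)^2)*(s*u*z*(q:ℂ)*L)*(u*z*((u*(q:ℂ)^2*z*L - s*(q:ℂ))*(Pb*Pc*Pd))) ≠ 0 :=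
    mul_ne_zero (mul_ne_zero hq2
        (mul_ne_zero (mul_ne_zero (mul_ne_zero (mul_ne_zero hs hu) hz) hqc) hL0))
      (mul_ne_zero (mul_ne_zero hu hz) (mul_ne_zero h1d2' hPPP))
  have hDD : (1-(q:ℂ)^2)*(u*z*L*s*x)*((L - u*z*x)*((L*x - u*z)*(Pb*Pc*Pd))) ≠ 0 :=
    mul_ne_zero (mul_ne_zero hq2
        (mul_ne_zero (mul_ne_zero (mul_ne_zero (mul_ne_zero hu hz) hL0) hs) hx))
      (mul_ne_zero h1b' (mul_ne_zero h1c' hPPP))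
  have tA : E * ((s^2*u*z*(q:ℂ)*L + u*z*(q:ℂ)*L - s*u^2*z^2*(q:ℂ)^2*L^2 - s)/(s*u*z*(q:ℂ)*L) / ((1 - (q:ℂ)^2)/(q:ℂ))) *
        (-(s*u*z*(q:ℂ)^2*L^2) * (K1*K2*A2*T) /
          (E*u*z*((u*(q:ℂ)^2*z*L - s*(q:ℂ))*(Pb*Pc*Pd))))
      = ((q:ℂ)*(s^2*u*z*(q:ℂ)*L + u*z*(q:ℂ)*L - s*u^2*z^2*(q:ℂ)^2*L^2 - s)
            *(-(s*u*z*(q:ℂ)^2*L^2))*(K1*K2*A2*T)) /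
        ((1-(q:ℂ)^2)*(s*u*z*(q:ℂ)*L)*(u*z*((u*(q:ℂ)^2*z*L - s*(q:ℂ))*(Pb*Pc*Pd)))) := by
    field_simp [h1d2', hq2, hPb, hPc, hPd]
  have tB : (u^2*z^2*s + L^2*s - s^2*u*z*L - u*z*L)/(u*z*L*s) / ((1 - (q:ℂ)^2)/(q:ℂ)) *
        (L^2*x*(1 - u*s*z*(q:ℂ)*L)*(K1*K2*A2*T) /
          ((L - u*z*x)*((L*x - u*z)*(Pb*Pc*Pd))))
      = ((q:ℂ)*(u^2*z^2*s + L^2*s - s^2*u*z*L - u*z*L)*x*(L^2*x*(1 - u*s*z*(q:ℂ)*L))*(K1*K2*A2*T)) /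
        ((1-(q:ℂ)^2)*(u*z*L*s*x)*((L - u*z*x)*((L*x - u*z)*(Pb*Pc*Pd)))) := by
    field_simp [h1b', h1c', hq2, hPb, hPc, hPd]
  have tC : ((x^2+1)/x / ((1 - (q:ℂ)^2)/(q:ℂ)) - (s^2+1)/s / ((1 - (q:ℂ)^2)/(q:ℂ))) *
        (L^2*x*(1 - u*s*z*(q:ℂ)*L)*(K1*K2*A2*T) /
          ((L - u*z*x)*((L*x - u*z)*(Pb*Pc*Pd))))
      = ((q:ℂ)*(x^2*s + s - s^2*x - x)*u*z*L*(L^2*x*(1 - u*s*z*(q:ℂ)*L))*(K1*K2*A2*T)) /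
        ((1-(q:ℂ)^2)*(u*z*L*s*x)*((L - u*z*x)*((L*x - u*z)*(Pb*Pc*Pd)))) := by
    field_simp [h1b', h1c', hq2, hPb, hPc, hPd]
    ring
  rw [tA, tB, tC]
  exact frac_identity _ _ _ _ _ hDA hDD (by ring)

end
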